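/- arXiv:2402.01129 — 2 statements merged into one kernel-verified Lean document; each statement's English description precedes it below -/
import Mathlib

section
/- For integers a, b, c, d, e, f ≥ 2, the 3-braid β = σ_1^a σ_2^b σ_1^c σ_2^d σ_1^e σ_2^f is a positive braid with fractional Dehn twist coefficient c(β) > 1, yet β does not contain a full twist (i.e., Δ^{−2}β is not a positive braid, where Δ² = (σ_1σ_2)³). -/
/-! Braid groups via the Artin presentation. `BraidGroup n` is the braid group `B_n`
on `n` strands, with Artin generators `braidGen i` (`σ_{i+1}`) for `i : Fin (n-1)`. -/

/-- The Artin relations of the braid group `B_n`. -/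
def braidRels (n : ℕ) : Set (FreeGroup (Fin (n - 1))) :=
  {r | (∃ i j : Fin (n - 1), (i : ℕ) + 2 ≤ (j : ℕ) ∧
          r = FreeGroup.of i * FreeGroup.of j * (FreeGroup.of i)⁻¹ * (FreeGroup.of j)⁻¹) ∨
       (∃ i j : Fin (n - 1), (i : ℕ) + 1 = (j : ℕ) ∧
          r = FreeGroup.of i * FreeGroup.of j * FreeGroup.of i *
              (FreeGroup.of j)⁻¹ * (FreeGroup.of i)⁻¹ * (FreeGroup.of j)⁻¹)}

/-- The braid group `B_n` on `n` strands. -/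
def BraidGroup (n : ℕ) : Type := PresentedGroup (braidRels n)

instance (n : ℕ) : Group (BraidGroup n) :=
  inferInstanceAs (Group (PresentedGroup (braidRels n)))

/-- The Artin generator `σ_{i+1}` of `B_n`. -/
def braidGen {n : ℕ} (i : Fin (n - 1)) : BraidGroup n := PresentedGroup.of i

/-- A braid is positive if it is a product of positive Artin generators. -/
def IsPositiveBraid {n : ℕ} (β : BraidGroup n) : Prop :=
  β ∈ Submonoid.closure (Set.range (braidGen (n := n)))

/-- The full twist `Δ² = (σ_1 σ_2 ⋯ σ_{n-1})^n ∈ B_n`. -/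
def fullTwist (n : ℕ) : BraidGroup n :=
  ((List.ofFn fun i : Fin (n - 1) => braidGen i).prod) ^ n

/-- A braid `β ∈ B_n` contains at least `k` full twists if `Δ^{-2k} β` is a positive braid. -/
def ContainsFullTwists {n : ℕ} (k : ℤ) (β : BraidGroup n) : Prop :=
  IsPositiveBraid (fullTwist n ^ (-k) * β)

/-- Given an assignment `comp` of the strands of a braid to the components of its closure,
`strandCount comp i` is the number `b(C_i, β)` of strands belonging to the `i`-th component. -/
def strandCount {r m : ℕ} (comp : Fin r → Fin m) (i : Fin m) : ℕ :=
  (Finset.univ.filter fun s => comp s = i).card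


namespace NoFT

open Monoid Multiplicative

abbrev Mfam : Bool → Type
  | false => Multiplicative (ZMod 2)
  | true => Multiplicative (ZMod 3)

instance : ∀ b, Group (Mfam b)
  | false => inferInstanceAs (Group (Multiplicative (ZMod 2)))
  | true => inferInstanceAs (Group (Multiplicative (ZMod 3)))

instance : ∀ b, DecidableEq (Mfam b)
  | false => inferInstanceAs (DecidableEq (Multiplicative (ZMod 2)))
  | true => inferInstanceAs (DecidableEq (Multiplicative (ZMod 3)))

abbrev G3 := Monoid.CoprodI Mfam

def X : G3 := CoprodI.of (M := Mfam) (i := false) (ofAdd (1 : ZMod 2))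

def Yk (k : ZMod 3) : G3 := CoprodI.of (M := Mfam) (i := true) (ofAdd k)

lemma X_mul_X : X * X = 1 := by
  rw [X, ← MonoidHom.map_mul, ← ofAdd_add]
  have : (1 : ZMod 2) + 1 = 0 := by decide
  rw [this, ofAdd_zero, MonoidHom.map_one]

lemma Yk_mul (k k' : ZMod 3) : Yk k * Yk k' = Yk (k + k') := by
  rw [Yk, Yk, Yk, ← MonoidHom.map_mul, ← ofAdd_add]

lemma Yk_zero : Yk 0 = 1 := by
  rw [Yk, ofAdd_zero]; exact MonoidHom.map_one _

lemma Y22 : Yk 2 * Yk 2 = Yk 1 := by rw [Yk_mul, show (2:ZMod 3)+2 = 1 by decide]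
lemma Y12 : Yk 1 * Yk 2 = 1 := by rw [Yk_mul]; rw [show (1:ZMod 3)+2 = 0 by decide, Yk_zero]
lemma Y21 : Yk 2 * Yk 1 = 1 := by rw [Yk_mul]; rw [show (2:ZMod 3)+1 = 0 by decide, Yk_zero]

def s1 : G3 := Yk 2 * X
def s2 : G3 := X * Yk 2

lemma braid_s : s1 * s2 * s1 = s2 * s1 * s2 := by
  have h1 : s1 * s2 * s1 = X := by
    rw [s1, s2]
    calc Yk 2 * X * (X * Yk 2) * (Yk 2 * X)
        = Yk 2 * (X * X) * (Yk 2 * Yk 2) * X := by group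
      _ = X := by rw [X_mul_X, Y22, mul_one, Y21, one_mul]
  have h2 : s2 * s1 * s2 = X := by
    rw [s1, s2]
    calc X * Yk 2 * (Yk 2 * X) * (X * Yk 2)
        = X * (Yk 2 * Yk 2) * (X * X) * Yk 2 := by group
      _ = X := by rw [X_mul_X, Y22, mul_one, mul_assoc, Y12, mul_one]
  rw [h1, h2]

lemma s1s2 : s1 * s2 = Yk 1 := by
  rw [s1, s2]
  calc Yk 2 * X * (X * Yk 2) = Yk 2 * (X * X) * Yk 2 := by group
    _ = Yk 1 := by rw [X_mul_X, mul_one, Y22]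

lemma Y11 : Yk 1 * Yk 1 = Yk 2 := by rw [Yk_mul, show (1:ZMod 3)+1 = 2 by decide]

lemma s1s2_cube : (s1 * s2) ^ 3 = 1 := by
  rw [s1s2, pow_succ, pow_two, Y11, Y21]

end NoFT

namespace NoFT

open Monoid Multiplicative Monoid.CoprodI

/-- number of `true`-indexed (i.e. `ZMod 3`) letters of a reduced word -/
def cntY (w : Word Mfam) : ℕ := w.toList.countP (fun l => l.1)

def lenY (g : G3) : ℕ := cntY (Word.equiv g)

lemma cntY_tail_le {i : Bool} (p : Word.Pair Mfam i) :
    cntY p.tail ≤ cntY (Word.rcons p) := by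
  rw [Word.rcons]
  split
  · exact le_rfl
  · simp only [cntY, Word.cons, List.countP_cons]
    exact Nat.le_add_right _ _

lemma cntY_rcons_le {i : Bool} (p : Word.Pair Mfam i) :
    cntY (Word.rcons p) ≤ cntY p.tail + (if i then 1 else 0) := by
  rw [Word.rcons]
  split
  · exact Nat.le_add_right _ _
  · simp only [cntY, Word.cons, List.countP_cons]
    cases i <;> simp

lemma cntY_smul_le (i : Bool) (m : Mfam i) (w : Word Mfam) :
    cntY (CoprodI.of m • w) ≤ cntY w + (if i then 1 else 0) := by
  rw [Word.of_smul_def]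
  refine le_trans (cntY_rcons_le _) ?_
  have h1 : Word.rcons (Word.equivPair i w) = w := by
    rw [← Word.equivPair_symm]
    exact (Word.equivPair i).symm_apply_apply w
  have h2 : cntY (Word.equivPair i w).tail ≤ cntY w := by
    conv_rhs => rw [← h1]
    exact cntY_tail_le _
  exact Nat.add_le_add_right h2 _

lemma equiv_mul_of (i : Bool) (m : Mfam i) (g : G3) :
    Word.equiv (CoprodI.of m * g) = CoprodI.of m • Word.equiv g := by
  simp only [Word.equiv, Equiv.coe_fn_mk]
  rw [mul_smul]

lemma lenY_mul_of (i : Bool) (m : Mfam i) (g : G3) :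
    lenY (CoprodI.of m * g) ≤ lenY g + (if i then 1 else 0) := by
  rw [lenY, equiv_mul_of]
  exact cntY_smul_le i m _

lemma lenY_X_mul (g : G3) : lenY (X * g) ≤ lenY g := by
  simpa [X] using lenY_mul_of false (ofAdd (1 : ZMod 2)) g

lemma lenY_Yk_mul (k : ZMod 3) (g : G3) : lenY (Yk k * g) ≤ lenY g + 1 := by
  simpa [Yk] using lenY_mul_of true (ofAdd k) g

lemma lenY_s1_mul (g : G3) : lenY (s1 * g) ≤ lenY g + 1 := by
  rw [s1, mul_assoc]
  exact le_trans (lenY_Yk_mul 2 _) (Nat.add_le_add_right (lenY_X_mul g) 1)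

lemma lenY_s2_mul (g : G3) : lenY (s2 * g) ≤ lenY g + 1 := by
  rw [s2, mul_assoc]
  exact le_trans (lenY_X_mul _) (lenY_Yk_mul 2 g)

lemma lenY_one : lenY 1 = 0 := by
  rw [lenY]
  show cntY ((1 : G3) • Word.empty) = 0
  rw [one_smul]
  rfl

end NoFT

namespace NoFT

open Monoid Multiplicative Monoid.CoprodI

def yletter (k : ZMod 3) : Σ i, Mfam i := ⟨true, ofAdd k⟩
def xletter : Σ i, Mfam i := ⟨false, ofAdd (1 : ZMod 2)⟩

def wlist : List (ZMod 3) → List (Σ i, Mfam i)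
  | [] => []
  | [k] => [yletter k]
  | k :: k' :: rest => yletter k :: xletter :: wlist (k' :: rest)

lemma wlist_cons_cons (k k' : ZMod 3) (rest : List (ZMod 3)) :
    wlist (k :: k' :: rest) = yletter k :: xletter :: wlist (k' :: rest) := rfl

lemma wlist_chain : ∀ K : List (ZMod 3),
    (wlist K).Chain' (fun l l' : Σ i, Mfam i => l.1 ≠ l'.1)
  | [] => List.isChain_nil
  | [k] => List.isChain_singleton _
  | k :: k' :: rest => by
    rw [wlist_cons_cons]
    refine List.IsChain.cons (List.IsChain.cons (wlist_chain (k' :: rest)) ?_) ?_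
    · intro z hz
      have : (wlist (k' :: rest)).head? = some (yletter k') := by
        cases rest <;> rfl
      rw [this] at hz
      cases hz
      simp [xletter, yletter]
    · intro z hz
      cases hz
      simp [yletter, xletter]

lemma wlist_ne_one : ∀ K : List (ZMod 3), (∀ k ∈ K, k ≠ 0) →
    ∀ l ∈ wlist K, l.2 ≠ 1
  | [] => by intro _ l hl; cases hl
  | [k] => by
    intro hK l hl
    simp only [wlist, List.mem_singleton] at hl
    subst hl
    simp only [yletter]
    intro hcon
    exact hK k (by simp) (by
      have := congrArg toAdd hcon
      simp at this; exact this)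
  | k :: k' :: rest => by
    intro hK l hl
    rw [wlist_cons_cons, List.mem_cons, List.mem_cons] at hl
    rcases hl with h | h | h
    · subst h
      simp only [yletter]
      intro hcon
      exact hK k (by simp) (by
        have := congrArg toAdd hcon
        simp at this; exact this)
    · subst h
      simp only [xletter]
      intro hcon
      have := congrArg toAdd hcon
      simp at this; exact absurd this (by decide)
    · exact wlist_ne_one (k' :: rest) (fun x hx => hK x (by simp [hx])) l h

def nfWord (K : List (ZMod 3)) (hK : ∀ k ∈ K, k ≠ 0) : Word Mfam :=
  ⟨wlist K, wlist_ne_one K hK, wlist_chain K⟩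

def altP : List (ZMod 3) → G3
  | [] => 1
  | [k] => Yk k
  | k :: k' :: rest => Yk k * (X * altP (k' :: rest))

lemma prod_nfWord_aux : ∀ K : List (ZMod 3),
    ((wlist K).map fun l => CoprodI.of l.snd).prod = altP K
  | [] => rfl
  | [k] => by simp [wlist, altP, yletter, Yk]
  | k :: k' :: rest => by
    rw [wlist_cons_cons, altP]
    simp only [List.map_cons, List.prod_cons]
    rw [prod_nfWord_aux (k' :: rest)]
    rfl

lemma prod_nfWord (K : List (ZMod 3)) (hK : ∀ k ∈ K, k ≠ 0) :
    (nfWord K hK).prod = altP K := prod_nfWord_aux K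

lemma cntY_wlist : ∀ K : List (ZMod 3), (wlist K).countP (fun l => l.1) = K.length
  | [] => rfl
  | [k] => rfl
  | k :: k' :: rest => by
    rw [wlist_cons_cons]
    simp only [List.countP_cons, List.length_cons]
    rw [cntY_wlist (k' :: rest)]
    simp [yletter, xletter]

lemma lenY_altP (K : List (ZMod 3)) (hK : ∀ k ∈ K, k ≠ 0) :
    lenY (altP K) = K.length := by
  have h : Word.equiv (altP K) = nfWord K hK := by
    rw [← prod_nfWord K hK]
    exact Word.equiv.apply_symm_apply (nfWord K hK)
  rw [lenY, h]
  exact cntY_wlist K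

end NoFT

namespace NoFT

open Monoid Multiplicative Monoid.CoprodI

def alt' (K : List (ZMod 3)) : G3 := (K.map fun k => Yk k * X).prod

lemma alt'_nil : alt' [] = 1 := rfl

lemma alt'_cons (k : ZMod 3) (K : List (ZMod 3)) :
    alt' (k :: K) = Yk k * X * alt' K := by
  rw [alt', alt', List.map_cons, List.prod_cons]

lemma alt'_append (K L : List (ZMod 3)) :
    alt' (K ++ L) = alt' K * alt' L := by
  rw [alt', alt', alt', List.map_append, List.prod_append]

lemma altP_eq_alt' : ∀ (k : ZMod 3) (K : List (ZMod 3)),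
    altP (k :: K) = alt' (k :: K) * X
  | k, [] => by
    rw [altP, alt'_cons, alt'_nil, mul_one, mul_assoc, X_mul_X, mul_one]
  | k, k' :: rest => by
    rw [altP, altP_eq_alt' k' rest]
    simp only [alt'_cons]
    group

/-- `P n = s1 ^ n` as an alternating word -/
def P (n : ℕ) : G3 := alt' (List.replicate n 2)

lemma s1_pow : ∀ n : ℕ, s1 ^ n = P n
  | 0 => by rw [pow_zero]; rfl
  | n + 1 => by
    rw [pow_succ', s1_pow n, P, P, List.replicate_succ, alt'_cons, s1]

lemma X_inv : X⁻¹ = X := by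
  rw [inv_eq_iff_mul_eq_one, X_mul_X]

lemma s2_pow (n : ℕ) : s2 ^ n = X * P n * X := by
  have h : X * s1 * X⁻¹ = s2 := by
    rw [X_inv, s1, s2]
    calc X * (Yk 2 * X) * X = X * Yk 2 * (X * X) := by group
      _ = X * Yk 2 := by rw [X_mul_X, mul_one]
  rw [← h, conj_pow, s1_pow, X_inv]

/-- the junction lemma -/
lemma junction (L : List (ZMod 3)) (m n : ℕ) :
    alt' (L ++ List.replicate (m + 1) 2) * X * P (n + 1) =
      alt' ((L ++ List.replicate m 2) ++ (1 :: List.replicate n 2)) := by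
  have e1 : alt' (L ++ List.replicate (m + 1) 2) =
      alt' L * (alt' (List.replicate m 2) * (Yk 2 * X * 1)) := by
    rw [List.replicate_succ' (n := m), alt'_append, alt'_append, alt'_cons, alt'_nil]
  have e2 : P (n + 1) = Yk 2 * X * alt' (List.replicate n 2) := by
    rw [P, List.replicate_succ, alt'_cons]
  have e3 : alt' ((L ++ List.replicate m 2) ++ (1 :: List.replicate n 2)) =
      alt' L * alt' (List.replicate m 2) * (Yk 1 * X * alt' (List.replicate n 2)) := by
    simp only [alt'_append, alt'_cons]
  rw [e1, e2, e3]
  calc alt' L * (alt' (List.replicate m 2) * (Yk 2 * X * 1)) * X *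
        (Yk 2 * X * alt' (List.replicate n 2))
      = alt' L * alt' (List.replicate m 2) *
          (Yk 2 * (X * X) * Yk 2 * X * alt' (List.replicate n 2)) := by group
    _ = alt' L * alt' (List.replicate m 2) *
          (Yk 1 * X * alt' (List.replicate n 2)) := by
        rw [X_mul_X, mul_one, Y22]

end NoFT

namespace NoFT

open Monoid Multiplicative Monoid.CoprodI

def rep (n : ℕ) : List (ZMod 3) := List.replicate n 2

def KK (a' b' c' d' e' f' : ℕ) : List (ZMod 3) :=
  rep (a'+1) ++ 1 :: (rep b' ++ 1 :: (rep c' ++ 1 :: (rep d' ++ 1 :: (rep e' ++ 1 :: rep (f'+1)))))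

lemma phi_word (a' b' c' d' e' f' : ℕ) :
    s1^(a'+2) * s2^(b'+2) * s1^(c'+2) * s2^(d'+2) * s1^(e'+2) * s2^(f'+2)
      = altP (KK a' b' c' d' e' f') := by
  rw [s1_pow, s2_pow, s1_pow, s2_pow, s1_pow, s2_pow]
  have h1 : P (a'+2) * X * P (b'+2) = alt' (rep (a'+1) ++ 1 :: rep (b'+1)) := by
    have := junction [] (a'+1) (b'+1)
    simpa [rep, P] using this
  have h2 : alt' (rep (a'+1) ++ 1 :: rep (b'+1)) * X * P (c'+2)
      = alt' (rep (a'+1) ++ 1 :: (rep b' ++ 1 :: rep (c'+1))) := by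
    have := junction (rep (a'+1) ++ [1]) b' (c'+1)
    simpa [rep, List.append_assoc] using this
  have h3 : alt' (rep (a'+1) ++ 1 :: (rep b' ++ 1 :: rep (c'+1))) * X * P (d'+2)
      = alt' (rep (a'+1) ++ 1 :: (rep b' ++ 1 :: (rep c' ++ 1 :: rep (d'+1)))) := by
    have := junction ((rep (a'+1) ++ [1]) ++ (rep b' ++ [1])) c' (d'+1)
    simpa [rep, List.append_assoc] using this
  have h4 : alt' (rep (a'+1) ++ 1 :: (rep b' ++ 1 :: (rep c' ++ 1 :: rep (d'+1)))) * X * P (e'+2)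
      = alt' (rep (a'+1) ++ 1 :: (rep b' ++ 1 :: (rep c' ++ 1 :: (rep d' ++ 1 :: rep (e'+1))))) := by
    have := junction ((rep (a'+1) ++ [1]) ++ ((rep b' ++ [1]) ++ (rep c' ++ [1]))) d' (e'+1)
    simpa [rep, List.append_assoc] using this
  have h5 : alt' (rep (a'+1) ++ 1 :: (rep b' ++ 1 :: (rep c' ++ 1 :: (rep d' ++ 1 :: rep (e'+1))))) * X * P (f'+2)
      = alt' (KK a' b' c' d' e' f') := by
    have := junction ((rep (a'+1) ++ [1]) ++ ((rep b' ++ [1]) ++ ((rep c' ++ [1]) ++ (rep d' ++ [1])))) e' (f'+1)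
    simpa [KK, rep, List.append_assoc] using this
  have hKcons : KK a' b' c' d' e' f' =
      2 :: (rep a' ++ 1 :: (rep b' ++ 1 :: (rep c' ++ 1 :: (rep d' ++ 1 :: (rep e' ++ 1 :: rep (f'+1)))))) := by
    simp [KK, rep, List.replicate_succ]
  calc P (a'+2) * (X * P (b'+2) * X) * P (c'+2) * (X * P (d'+2) * X) * P (e'+2) * (X * P (f'+2) * X)
      = ((((P (a'+2) * X * P (b'+2)) * X * P (c'+2)) * X * P (d'+2)) * X * P (e'+2)) * X * P (f'+2) * X := by
        group
    _ = alt' (KK a' b' c' d' e' f') * X := by rw [h1, h2, h3, h4, h5]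
    _ = altP (KK a' b' c' d' e' f') := by
        rw [hKcons, ← altP_eq_alt', ← hKcons]

lemma KK_ne_zero (a' b' c' d' e' f' : ℕ) : ∀ k ∈ KK a' b' c' d' e' f', k ≠ 0 := by
  intro k hk
  simp only [KK, rep, List.mem_append, List.mem_cons, List.mem_replicate] at hk
  have : k = 2 ∨ k = 1 := by tauto
  rcases this with h | h <;> subst h <;> decide

lemma KK_length (a' b' c' d' e' f' : ℕ) :
    (KK a' b' c' d' e' f').length = a' + b' + c' + d' + e' + f' + 7 := by
  simp [KK, rep]
  omega

lemma lenY_word (a' b' c' d' e' f' : ℕ) :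
    lenY (s1^(a'+2) * s2^(b'+2) * s1^(c'+2) * s2^(d'+2) * s1^(e'+2) * s2^(f'+2))
      = a' + b' + c' + d' + e' + f' + 7 := by
  rw [phi_word, lenY_altP _ (KK_ne_zero a' b' c' d' e' f'), KK_length]

end NoFT

namespace NoFT

open Monoid Multiplicative Monoid.CoprodI

def fgen : Fin (3-1) → G3 := fun i => if i.val = 0 then s1 else s2

lemma braid_rels_check : ∀ r ∈ braidRels 3, FreeGroup.lift fgen r = 1 := by
  intro r hr
  rcases hr with ⟨i, j, hij, rfl⟩ | ⟨i, j, hij, rfl⟩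
  · exfalso
    have := j.isLt
    omega
  · have hj' : j.val < 2 := j.isLt
    have hi : i.val = 0 := by omega
    have hj : j.val = 1 := by omega
    have hgi : fgen i = s1 := by simp [fgen, hi]
    have hgj : fgen j = s2 := by simp [fgen, hj]
    simp only [map_mul, map_inv, FreeGroup.lift_apply_of, hgi, hgj]
    rw [braid_s]
    group

def φB : BraidGroup 3 →* G3 :=
  PresentedGroup.toGroup braid_rels_check

lemma φB_gen (i : Fin (3-1)) : φB (braidGen i) = fgen i :=
  PresentedGroup.toGroup.of braid_rels_check

lemma φB_gen0 : φB (braidGen (0 : Fin (3-1))) = s1 := by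
  rw [φB_gen]; rfl

lemma φB_gen1 : φB (braidGen (1 : Fin (3-1))) = s2 := by
  rw [φB_gen]; rfl

lemma exp_rels_check :
    ∀ r ∈ braidRels 3, FreeGroup.lift (fun _ : Fin (3-1) => ofAdd (1 : ℤ)) r = 1 := by
  intro r hr
  rcases hr with ⟨i, j, hij, rfl⟩ | ⟨i, j, hij, rfl⟩ <;>
    · simp only [map_mul, map_inv, FreeGroup.lift_apply_of]
      group

def eB : BraidGroup 3 →* Multiplicative ℤ :=
  PresentedGroup.toGroup exp_rels_check

lemma eB_gen (i : Fin (3-1)) : eB (braidGen i) = ofAdd (1 : ℤ) :=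
  PresentedGroup.toGroup.of exp_rels_check

lemma braid_rel :
    braidGen (0 : Fin (3-1)) * braidGen (1 : Fin (3-1)) * braidGen (0 : Fin (3-1)) =
      braidGen (1 : Fin (3-1)) * braidGen (0 : Fin (3-1)) * braidGen (1 : Fin (3-1)) := by
  have hmem : (FreeGroup.of (0 : Fin (3-1)) * FreeGroup.of (1 : Fin (3-1)) *
      FreeGroup.of (0 : Fin (3-1)) * (FreeGroup.of (1 : Fin (3-1)))⁻¹ *
      (FreeGroup.of (0 : Fin (3-1)))⁻¹ * (FreeGroup.of (1 : Fin (3-1)))⁻¹) ∈ braidRels 3 :=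
    Or.inr ⟨0, 1, rfl, rfl⟩
  have h1 : PresentedGroup.mk (braidRels 3)
      (FreeGroup.of (0 : Fin (3-1)) * FreeGroup.of (1 : Fin (3-1)) *
      FreeGroup.of (0 : Fin (3-1)) * (FreeGroup.of (1 : Fin (3-1)))⁻¹ *
      (FreeGroup.of (0 : Fin (3-1)))⁻¹ * (FreeGroup.of (1 : Fin (3-1)))⁻¹) = 1 :=
    (QuotientGroup.eq_one_iff _).mpr (Subgroup.subset_normalClosure hmem)
  simp only [map_mul, map_inv] at h1
  have h2 : (braidGen (0 : Fin (3-1)) * braidGen (1 : Fin (3-1)) * braidGen (0 : Fin (3-1))) *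
      (braidGen (1 : Fin (3-1)) * braidGen (0 : Fin (3-1)) * braidGen (1 : Fin (3-1)))⁻¹ = 1 := by
    have e : (braidGen (0 : Fin (3-1)) * braidGen (1 : Fin (3-1)) * braidGen (0 : Fin (3-1))) *
        (braidGen (1 : Fin (3-1)) * braidGen (0 : Fin (3-1)) * braidGen (1 : Fin (3-1)))⁻¹ =
        braidGen (0 : Fin (3-1)) * braidGen (1 : Fin (3-1)) * braidGen (0 : Fin (3-1)) *
        (braidGen (1 : Fin (3-1)))⁻¹ * (braidGen (0 : Fin (3-1)))⁻¹ *
        (braidGen (1 : Fin (3-1)))⁻¹ := by group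
    rw [e]
    exact h1
  exact mul_inv_eq_one.mp h2

lemma fullTwist_eq :
    fullTwist 3 = (braidGen (0 : Fin (3-1)) * braidGen (1 : Fin (3-1))) ^ 3 := by
  rw [fullTwist]
  congr 1

lemma φB_fullTwist : φB (fullTwist 3) = 1 := by
  rw [fullTwist_eq, map_pow, map_mul, φB_gen0, φB_gen1, s1s2_cube]

lemma eB_fullTwist : eB (fullTwist 3) = ofAdd (6 : ℤ) := by
  rw [fullTwist_eq, map_pow, map_mul, eB_gen, eB_gen, ← ofAdd_add]
  rw [← ofAdd_nsmul]
  norm_num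

lemma lenY_pos_list : ∀ L : List (BraidGroup 3),
    (∀ y ∈ L, y ∈ Set.range (braidGen (n := 3))) → lenY (φB L.prod) ≤ L.length := by
  intro L
  induction L with
  | nil => intro _; simp only [List.prod_nil, map_one, lenY_one, List.length_nil, le_refl]
  | cons hd tl ih =>
    intro hmem
    rw [List.prod_cons, map_mul]
    obtain ⟨i, rfl⟩ := hmem hd List.mem_cons_self
    have htl : lenY (φB tl.prod) ≤ tl.length := ih (fun y hy => hmem y (List.mem_cons_of_mem _ hy))
    have hi : φB (braidGen i) = s1 ∨ φB (braidGen i) = s2 := by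
      rw [φB_gen, fgen]
      by_cases h0 : i.val = 0
      · left; simp [h0]
      · right; simp [h0]
    rcases hi with h | h <;> rw [h] <;> simp only [List.length_cons]
    · exact le_trans (lenY_s1_mul _) (Nat.add_le_add_right htl 1)
    · exact le_trans (lenY_s2_mul _) (Nat.add_le_add_right htl 1)

lemma eB_pos_list : ∀ L : List (BraidGroup 3),
    (∀ y ∈ L, y ∈ Set.range (braidGen (n := 3))) → eB L.prod = ofAdd (L.length : ℤ) := by
  intro L
  induction L with
  | nil => intro _; simp
  | cons hd tl ih =>
    intro hmem
    rw [List.prod_cons, map_mul]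
    obtain ⟨i, rfl⟩ := hmem hd List.mem_cons_self
    rw [eB_gen, ih (fun y hy => hmem y (List.mem_cons_of_mem _ hy)), ← ofAdd_add]
    congr 1
    simp
    omega

end NoFT

/-- For integers `a, b, c, d, e, f ≥ 2` the positive `3`-braid
`β = σ_1^a σ_2^b σ_1^c σ_2^d σ_1^e σ_2^f` has fractional Dehn twist coefficient `c(β) > 1`,
yet `β` does not contain a full twist. -/
theorem positive_braid_fdtc_gt_one_no_full_twist
    (fdtc : BraidGroup 3 → ℝ)
    (hfull : ∀ (N : ℤ) (γ : BraidGroup 3), fdtc (fullTwist 3 ^ N * γ) = (N : ℝ) + fdtc γ)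
    (hconj : ∀ γ δ : BraidGroup 3, fdtc (δ⁻¹ * γ * δ) = fdtc γ)
    (hpow : ∀ (γ : BraidGroup 3) (k : ℤ), fdtc (γ ^ k) = (k : ℝ) * fdtc γ)
    (hmono : ∀ (γ δ : BraidGroup 3) (i : Fin (3 - 1)),
      fdtc (γ * δ) ≤ fdtc (γ * braidGen i * δ))
    (a b c d e f : ℕ) (ha : 2 ≤ a) (hb : 2 ≤ b) (hc : 2 ≤ c) (hd : 2 ≤ d)
    (he : 2 ≤ e) (hf : 2 ≤ f)
    (β : BraidGroup 3)
    (hβ : β = braidGen (0 : Fin (3 - 1)) ^ a * braidGen (1 : Fin (3 - 1)) ^ b *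
        braidGen (0 : Fin (3 - 1)) ^ c * braidGen (1 : Fin (3 - 1)) ^ d *
        braidGen (0 : Fin (3 - 1)) ^ e * braidGen (1 : Fin (3 - 1)) ^ f) :
    IsPositiveBraid β ∧ 1 < fdtc β ∧ ¬ ContainsFullTwists 1 β := by
  obtain ⟨a', rfl⟩ : ∃ a', a = a' + 2 := ⟨a - 2, by omega⟩
  obtain ⟨b', rfl⟩ : ∃ b', b = b' + 2 := ⟨b - 2, by omega⟩
  obtain ⟨c', rfl⟩ : ∃ c', c = c' + 2 := ⟨c - 2, by omega⟩
  obtain ⟨d', rfl⟩ : ∃ d', d = d' + 2 := ⟨d - 2, by omega⟩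
  obtain ⟨e', rfl⟩ : ∃ e', e = e' + 2 := ⟨e - 2, by omega⟩
  obtain ⟨f', rfl⟩ : ∃ f', f = f' + 2 := ⟨f - 2, by omega⟩
  set g0 := braidGen (0 : Fin (3-1)) with hg0
  set g1 := braidGen (1 : Fin (3-1)) with hg1
  have hmem0 : g0 ∈ Set.range (braidGen (n := 3)) := ⟨0, rfl⟩
  have hmem1 : g1 ∈ Set.range (braidGen (n := 3)) := ⟨1, rfl⟩
  refine ⟨?_, ?_, ?_⟩
  · -- positivity
    rw [hβ]
    have h0 : g0 ∈ Submonoid.closure (Set.range (braidGen (n := 3))) :=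
      Submonoid.subset_closure hmem0
    have h1 : g1 ∈ Submonoid.closure (Set.range (braidGen (n := 3))) :=
      Submonoid.subset_closure hmem1
    exact Submonoid.mul_mem _ (Submonoid.mul_mem _ (Submonoid.mul_mem _ (Submonoid.mul_mem _
      (Submonoid.mul_mem _ (Submonoid.pow_mem _ h0 _) (Submonoid.pow_mem _ h1 _))
      (Submonoid.pow_mem _ h0 _)) (Submonoid.pow_mem _ h1 _)) (Submonoid.pow_mem _ h0 _))
      (Submonoid.pow_mem _ h1 _)
  · -- fdtc > 1
    have fd1 : fdtc 1 = 0 := by simpa using hpow 1 0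
    have fdΔ : fdtc (fullTwist 3) = 1 := by
      have := hfull 1 1
      simpa [fd1] using this
    have hΔw : fullTwist 3 = g0 * g1^2 * g0 * g1^2 := by
      rw [NoFT.fullTwist_eq, ← hg0, ← hg1]
      have hbr := NoFT.braid_rel
      rw [← hg0, ← hg1] at hbr
      calc (g0*g1)^3 = g0*g1*(g0*g1*g0)*g1 := by
            rw [pow_succ, pow_two]; simp only [mul_assoc]
        _ = g0*g1*(g1*g0*g1)*g1 := by rw [hbr]
        _ = g0*g1^2*g0*g1^2 := by simp only [pow_two, mul_assoc]
    have fdw : fdtc (g0 * g1^2 * g0 * g1^2) = 1 := by rw [← hΔw, fdΔ]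
    have step1 : fdtc (g0 * g1^2 * g0 * g1^2) ≤ fdtc (g0 * (g0 * g1^2 * g0 * g1^2)) := by
      have h := hmono 1 (g0 * g1^2 * g0 * g1^2) 0
      simpa [← hg0] using h
    have e1 : g0 * (g0 * g1^2 * g0 * g1^2) = (g0^2*g1^2) * (g0*g1^2) := by
      simp only [pow_two, mul_assoc]
    have step2 : fdtc ((g0^2*g1^2) * (g0*g1^2)) ≤ fdtc ((g0^2*g1^2) * g0 * (g0*g1^2)) := by
      have h := hmono (g0^2*g1^2) (g0*g1^2) 0
      rwa [← hg0] at h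
    have e2 : (g0^2*g1^2) * g0 * (g0*g1^2) = (g0^2*g1^2)^2 := by
      rw [pow_two (g0^2*g1^2)]; simp only [pow_two, mul_assoc]
    have hδ2 : (1:ℝ) ≤ fdtc ((g0^2*g1^2)^2) := by
      calc (1:ℝ) = fdtc (g0 * g1^2 * g0 * g1^2) := fdw.symm
        _ ≤ fdtc (g0 * (g0 * g1^2 * g0 * g1^2)) := step1
        _ = fdtc ((g0^2*g1^2) * (g0*g1^2)) := by rw [e1]
        _ ≤ fdtc ((g0^2*g1^2) * g0 * (g0*g1^2)) := step2
        _ = fdtc ((g0^2*g1^2)^2) := by rw [e2]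
    have hp2 : fdtc ((g0^2*g1^2)^2) = 2 * fdtc (g0^2*g1^2) := by
      have h := hpow (g0^2*g1^2) 2
      rw [zpow_ofNat] at h
      rw [h]; norm_num
    have hp3 : fdtc ((g0^2*g1^2)^3) = 3 * fdtc (g0^2*g1^2) := by
      have h := hpow (g0^2*g1^2) 3
      rw [zpow_ofNat] at h
      rw [h]; norm_num
    have hδ : (1:ℝ)/2 ≤ fdtc (g0^2*g1^2) := by
      rw [hp2] at hδ2; linarith
    have hδ3 : (3:ℝ)/2 ≤ fdtc ((g0^2*g1^2)^3) := by
      rw [hp3]; linarith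
    have ins : ∀ (k : ℕ) (i : Fin (3-1)) (γ ζ : BraidGroup 3),
        fdtc (γ * braidGen i^2 * ζ) ≤ fdtc (γ * braidGen i^(k+2) * ζ) := by
      intro k
      induction k with
      | zero => intro i γ ζ; exact le_rfl
      | succ n ih =>
        intro i γ ζ
        refine le_trans (ih i γ ζ) ?_
        have h := hmono (γ * braidGen i^(n+2)) ζ i
        have e : γ * braidGen i^(n+2) * braidGen i * ζ = γ * braidGen i^(n+2+1) * ζ := by
          simp only [pow_succ, mul_assoc]
        rwa [e] at h
    have t1 : fdtc ((g0^2*g1^2)^3) ≤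
        fdtc (g0^(a'+2) * (g1^2 * (g0^2 * (g1^2 * (g0^2 * g1^2))))) := by
      have h := ins a' 0 1 (g1^2 * (g0^2 * (g1^2 * (g0^2 * g1^2))))
      rw [← hg0] at h
      calc fdtc ((g0^2*g1^2)^3)
          = fdtc (1 * g0^2 * (g1^2 * (g0^2 * (g1^2 * (g0^2 * g1^2))))) := congrArg fdtc (by
            rw [pow_succ, pow_two]; simp only [mul_assoc, one_mul])
        _ ≤ fdtc (1 * g0^(a'+2) * (g1^2 * (g0^2 * (g1^2 * (g0^2 * g1^2))))) := h
        _ = fdtc (g0^(a'+2) * (g1^2 * (g0^2 * (g1^2 * (g0^2 * g1^2))))) := congrArg fdtc (by simp only [mul_assoc, one_mul, mul_one])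
    have t2 : fdtc (g0^(a'+2) * (g1^2 * (g0^2 * (g1^2 * (g0^2 * g1^2))))) ≤
        fdtc (g0^(a'+2) * (g1^(b'+2) * (g0^2 * (g1^2 * (g0^2 * g1^2))))) := by
      have h := ins b' 1 (g0^(a'+2)) (g0^2 * (g1^2 * (g0^2 * g1^2)))
      rw [← hg1] at h
      calc fdtc (g0^(a'+2) * (g1^2 * (g0^2 * (g1^2 * (g0^2 * g1^2)))))
          = fdtc (g0^(a'+2) * g1^2 * (g0^2 * (g1^2 * (g0^2 * g1^2)))) := congrArg fdtc (by simp only [mul_assoc, one_mul, mul_one])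
        _ ≤ fdtc (g0^(a'+2) * g1^(b'+2) * (g0^2 * (g1^2 * (g0^2 * g1^2)))) := h
        _ = fdtc (g0^(a'+2) * (g1^(b'+2) * (g0^2 * (g1^2 * (g0^2 * g1^2))))) :=
            congrArg fdtc (by simp only [mul_assoc, one_mul, mul_one])
    have t3 : fdtc (g0^(a'+2) * (g1^(b'+2) * (g0^2 * (g1^2 * (g0^2 * g1^2))))) ≤
        fdtc (g0^(a'+2) * (g1^(b'+2) * (g0^(c'+2) * (g1^2 * (g0^2 * g1^2))))) := by
      have h := ins c' 0 (g0^(a'+2) * g1^(b'+2)) (g1^2 * (g0^2 * g1^2))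
      rw [← hg0] at h
      calc fdtc (g0^(a'+2) * (g1^(b'+2) * (g0^2 * (g1^2 * (g0^2 * g1^2)))))
          = fdtc (g0^(a'+2) * g1^(b'+2) * g0^2 * (g1^2 * (g0^2 * g1^2))) := congrArg fdtc (by simp only [mul_assoc, one_mul, mul_one])
        _ ≤ fdtc (g0^(a'+2) * g1^(b'+2) * g0^(c'+2) * (g1^2 * (g0^2 * g1^2))) := h
        _ = fdtc (g0^(a'+2) * (g1^(b'+2) * (g0^(c'+2) * (g1^2 * (g0^2 * g1^2))))) :=
            congrArg fdtc (by simp only [mul_assoc, one_mul, mul_one])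
    have t4 : fdtc (g0^(a'+2) * (g1^(b'+2) * (g0^(c'+2) * (g1^2 * (g0^2 * g1^2))))) ≤
        fdtc (g0^(a'+2) * (g1^(b'+2) * (g0^(c'+2) * (g1^(d'+2) * (g0^2 * g1^2))))) := by
      have h := ins d' 1 (g0^(a'+2) * g1^(b'+2) * g0^(c'+2)) (g0^2 * g1^2)
      rw [← hg1] at h
      calc fdtc (g0^(a'+2) * (g1^(b'+2) * (g0^(c'+2) * (g1^2 * (g0^2 * g1^2)))))
          = fdtc (g0^(a'+2) * g1^(b'+2) * g0^(c'+2) * g1^2 * (g0^2 * g1^2)) := congrArg fdtc (by simp only [mul_assoc, one_mul, mul_one])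
        _ ≤ fdtc (g0^(a'+2) * g1^(b'+2) * g0^(c'+2) * g1^(d'+2) * (g0^2 * g1^2)) := h
        _ = fdtc (g0^(a'+2) * (g1^(b'+2) * (g0^(c'+2) * (g1^(d'+2) * (g0^2 * g1^2))))) :=
            congrArg fdtc (by simp only [mul_assoc, one_mul, mul_one])
    have t5 : fdtc (g0^(a'+2) * (g1^(b'+2) * (g0^(c'+2) * (g1^(d'+2) * (g0^2 * g1^2))))) ≤
        fdtc (g0^(a'+2) * (g1^(b'+2) * (g0^(c'+2) * (g1^(d'+2) * (g0^(e'+2) * g1^2))))) := by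
      have h := ins e' 0 (g0^(a'+2) * g1^(b'+2) * g0^(c'+2) * g1^(d'+2)) (g1^2)
      rw [← hg0] at h
      calc fdtc (g0^(a'+2) * (g1^(b'+2) * (g0^(c'+2) * (g1^(d'+2) * (g0^2 * g1^2)))))
          = fdtc (g0^(a'+2) * g1^(b'+2) * g0^(c'+2) * g1^(d'+2) * g0^2 * g1^2) := congrArg fdtc (by simp only [mul_assoc, one_mul, mul_one])
        _ ≤ fdtc (g0^(a'+2) * g1^(b'+2) * g0^(c'+2) * g1^(d'+2) * g0^(e'+2) * g1^2) := h
        _ = fdtc (g0^(a'+2) * (g1^(b'+2) * (g0^(c'+2) * (g1^(d'+2) * (g0^(e'+2) * g1^2))))) :=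
            congrArg fdtc (by simp only [mul_assoc, one_mul, mul_one])
    have t6 : fdtc (g0^(a'+2) * (g1^(b'+2) * (g0^(c'+2) * (g1^(d'+2) * (g0^(e'+2) * g1^2))))) ≤
        fdtc β := by
      have h := ins f' 1 (g0^(a'+2) * g1^(b'+2) * g0^(c'+2) * g1^(d'+2) * g0^(e'+2)) 1
      rw [← hg1] at h
      calc fdtc (g0^(a'+2) * (g1^(b'+2) * (g0^(c'+2) * (g1^(d'+2) * (g0^(e'+2) * g1^2)))))
          = fdtc (g0^(a'+2) * g1^(b'+2) * g0^(c'+2) * g1^(d'+2) * g0^(e'+2) * g1^2 * 1) :=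
            congrArg fdtc (by simp only [mul_assoc, one_mul, mul_one])
        _ ≤ fdtc (g0^(a'+2) * g1^(b'+2) * g0^(c'+2) * g1^(d'+2) * g0^(e'+2) * g1^(f'+2) * 1) := h
        _ = fdtc β := congrArg fdtc (by rw [hβ, mul_one])
    have : (3:ℝ)/2 ≤ fdtc β :=
      le_trans hδ3 (le_trans t1 (le_trans t2 (le_trans t3 (le_trans t4 (le_trans t5 t6)))))
    linarith
  · -- no full twist
    intro hcontain
    rw [ContainsFullTwists] at hcontain
    obtain ⟨Lst, hLmem, hLprod⟩ := Submonoid.exists_list_of_mem_closure hcontain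
    -- matrix image of β
    have hφβ : NoFT.φB β = NoFT.s1^(a'+2) * NoFT.s2^(b'+2) * NoFT.s1^(c'+2) *
        NoFT.s2^(d'+2) * NoFT.s1^(e'+2) * NoFT.s2^(f'+2) := by
      rw [hβ]
      simp only [map_mul, map_pow, ← hg0, ← hg1]
      rw [NoFT.φB_gen0, NoFT.φB_gen1]
    have hφprod : NoFT.φB Lst.prod = NoFT.φB β := by
      rw [hLprod, map_mul, map_zpow, NoFT.φB_fullTwist]
      simp
    have hlen : NoFT.lenY (NoFT.φB Lst.prod) ≤ Lst.length :=
      NoFT.lenY_pos_list Lst hLmem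
    have hlenβ : NoFT.lenY (NoFT.φB β) = a' + b' + c' + d' + e' + f' + 7 := by
      rw [hφβ]
      exact NoFT.lenY_word a' b' c' d' e' f'
    -- exponent sum
    have en : ∀ n : ℕ, (Multiplicative.ofAdd (1:ℤ))^n = Multiplicative.ofAdd (n:ℤ) := by
      intro n; rw [← ofAdd_nsmul]; congr 1; simp
    have heβ : NoFT.eB β =
        Multiplicative.ofAdd ((((a'+2) + (b'+2) + (c'+2) + (d'+2) + (e'+2) + (f'+2) : ℕ)) : ℤ) := by
      rw [hβ]
      simp only [map_mul, map_pow, hg0, hg1, NoFT.eB_gen, en, ← ofAdd_add]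
      exact congrArg Multiplicative.ofAdd (by push_cast; ring)
    have heprod : NoFT.eB Lst.prod = Multiplicative.ofAdd (Lst.length : ℤ) :=
      NoFT.eB_pos_list Lst hLmem
    have heprod2 : NoFT.eB Lst.prod =
        Multiplicative.ofAdd ((-6 : ℤ) +
          (((a'+2) + (b'+2) + (c'+2) + (d'+2) + (e'+2) + (f'+2) : ℕ) : ℤ)) := by
      rw [hLprod, map_mul, map_zpow, NoFT.eB_fullTwist, heβ, ← ofAdd_zsmul, ← ofAdd_add]
      exact congrArg Multiplicative.ofAdd (by push_cast [smul_eq_mul]; ring)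
    have hL : (Lst.length : ℤ) = (-6 : ℤ) +
        (((a'+2) + (b'+2) + (c'+2) + (d'+2) + (e'+2) + (f'+2) : ℕ) : ℤ) := by
      have h2 := heprod.symm.trans heprod2
      exact congrArg Multiplicative.toAdd h2
    rw [hφprod, hlenβ] at hlen
    omega
end

section
/- In the braid group B_n, the fractional Dehn twist coefficient of the braid σ_1σ_2⋯σ_{n−1} equals 1/n; consequently, if a positive braid α can be written as a positive word containing all the generators σ_1, …, σ_{n−1}, then c(α) ≥ 1/n > 0. -/
/-- Far commutation relation. -/
lemma braid_comm {n : ℕ} (i j : Fin (n - 1)) (h : (i : ℕ) + 2 ≤ (j : ℕ)) :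
    Commute (braidGen (n := n) i) (braidGen j) := by
  have hr : (FreeGroup.of i * FreeGroup.of j * (FreeGroup.of i)⁻¹ * (FreeGroup.of j)⁻¹)
      ∈ braidRels n := Or.inl ⟨i, j, h, rfl⟩
  have h1 : PresentedGroup.mk (braidRels n)
      (FreeGroup.of i * FreeGroup.of j * (FreeGroup.of i)⁻¹ * (FreeGroup.of j)⁻¹) = 1 := by
    have : (FreeGroup.of i * FreeGroup.of j * (FreeGroup.of i)⁻¹ * (FreeGroup.of j)⁻¹)
        ∈ Subgroup.normalClosure (braidRels n) := Subgroup.subset_normalClosure hr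
    exact (QuotientGroup.eq_one_iff _).2 this
  simp only [map_mul, map_inv] at h1
  have h2 : braidGen (n := n) i * braidGen j * (braidGen i)⁻¹ * (braidGen j)⁻¹ = 1 := h1
  have h3 : braidGen (n:=n) i * braidGen j * (braidGen i)⁻¹ = braidGen j := mul_inv_eq_one.mp h2
  exact mul_inv_eq_iff_eq_mul.mp h3

/-- σ_k σ_{k+1} ⋯ σ_{n-1}. -/
def braidTail (n k : ℕ) : BraidGroup n :=
  (((List.ofFn fun i : Fin (n - 1) => braidGen i)).drop k).prod

lemma braidTail_zero (n : ℕ) :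
    braidTail n 0 = (List.ofFn fun i : Fin (n - 1) => braidGen i).prod := rfl

lemma braidTail_last (n : ℕ) : braidTail n (n - 1) = 1 := by
  unfold braidTail
  rw [List.drop_of_length_le (by simp)]
  rfl

lemma braidTail_succ (n k : ℕ) (hk : k < n - 1) :
    braidTail n k = braidGen ⟨k, hk⟩ * braidTail n (k + 1) := by
  unfold braidTail
  rw [← List.cons_getElem_drop_succ (n := k) (h := by simpa using hk), List.prod_cons,
    List.getElem_ofFn]

lemma mem_drop_ofFn {n k : ℕ} (x : BraidGroup n)
    (hx : x ∈ ((List.ofFn fun i : Fin (n - 1) => braidGen i)).drop k) :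
    ∃ j : Fin (n - 1), k ≤ (j : ℕ) ∧ x = braidGen j := by
  obtain ⟨i, hi, rfl⟩ := List.mem_iff_getElem.mp hx
  have hlen : i < (((List.ofFn fun i : Fin (n - 1) => braidGen i)).drop k).length := hi
  simp only [List.length_drop, List.length_ofFn] at hlen
  rw [List.getElem_drop, List.getElem_ofFn]
  exact ⟨_, by simp, rfl⟩

/-- Key: a word using each generator `< k` exactly once, followed by the ascending tail
from `k`, is conjugate to the full ascending word `δ`. -/
lemma conj_delta {n : ℕ} : ∀ (k : ℕ), k ≤ n - 1 → ∀ w : List (Fin (n - 1)), w.Nodup →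
    (∀ i : Fin (n - 1), i ∈ w ↔ (i : ℕ) < k) →
    ∃ u : BraidGroup n, (w.map braidGen).prod * braidTail n k =
      u⁻¹ * (List.ofFn fun i : Fin (n - 1) => braidGen i).prod * u := by
  intro k
  induction k with
  | zero =>
    intro _ w _ hmem
    have : w = [] := List.eq_nil_iff_forall_not_mem.mpr fun i hi => by simpa using (hmem i).1 hi
    subst this
    exact ⟨1, by simp [braidTail_zero]⟩
  | succ k ih =>
    intro hk1 w hnd hmem
    have hk : k < n - 1 := hk1
    set K : Fin (n - 1) := ⟨k, hk⟩ with hK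
    have hKw : K ∈ w := (hmem K).2 (by simp [hK])
    obtain ⟨a, b, rfl⟩ := List.append_of_mem hKw
    -- all letters of a and b have value < k
    have hperm : (a ++ K :: b).Perm (K :: (a ++ b)) := List.perm_middle
    have hnd' : (K :: (a ++ b)).Nodup := hperm.nodup hnd
    have hKab : K ∉ a ++ b := (List.nodup_cons.mp hnd').1
    have hablt : ∀ i : Fin (n - 1), i ∈ a ++ b → (i : ℕ) < k := by
      intro i hi
      have h1 : (i : ℕ) < k + 1 := (hmem i).1 (by
        rcases List.mem_append.mp hi with h | h
        · exact List.mem_append.mpr (Or.inl h)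
        · exact List.mem_append.mpr (Or.inr (List.mem_cons_of_mem _ h)))
      have : i ≠ K := fun h => hKab (h ▸ hi)
      have : (i : ℕ) ≠ k := fun h => this (Fin.ext h)
      omega
    -- b's generators commute with braidTail n (k+1)
    have hcomm : Commute ((b.map braidGen).prod) (braidTail n (k + 1)) := by
      apply Commute.list_prod_left
      intro x hxb
      obtain ⟨i, hia, rfl⟩ := List.mem_map.mp hxb
      apply Commute.list_prod_right
      intro y hy
      obtain ⟨j, hj, rfl⟩ := mem_drop_ofFn y hy
      exact braid_comm i j (by have := hablt i (List.mem_append.mpr (Or.inr hia)); omega)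
    -- rewrite the product
    have step : ((a ++ K :: b).map braidGen).prod * braidTail n (k + 1) =
        (a.map braidGen).prod * (braidTail n k * (b.map braidGen).prod) := by
      rw [braidTail_succ n k hk]
      simp only [List.map_append, List.map_cons, List.prod_append, List.prod_cons]
      rw [mul_assoc, mul_assoc, hcomm.eq, ← hK]
      group
    obtain ⟨v, hv⟩ := ih (le_of_lt hk) (b ++ a)
      (((hnd'.of_cons).perm (List.perm_append_comm)))
      (by
        intro i
        constructor
        · intro hi
          exact hablt i ((List.perm_append_comm).mem_iff.mp hi)
        · intro hi
          have hiw : i ∈ a ++ K :: b := (hmem i).2 (by omega)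
          have : i ≠ K := fun h => by simp [h, hK] at hi
          rcases List.mem_append.mp hiw with h | h
          · exact List.mem_append.mpr (Or.inr h)
          · rcases List.mem_cons.mp h with h | h
            · exact absurd h this
            · exact List.mem_append.mpr (Or.inl h))
    refine ⟨v * (b.map braidGen).prod, ?_⟩
    have hba : ((b ++ a).map braidGen).prod = (b.map braidGen).prod * (a.map braidGen).prod := by
      simp
    rw [step]
    have : (a.map braidGen).prod * (braidTail n k * (b.map braidGen).prod) =
        ((b.map braidGen).prod)⁻¹ * (((b ++ a).map braidGen).prod * braidTail n k) *
          (b.map braidGen).prod := by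
      rw [hba]; group
    rw [this, hv]
    group

lemma fdtc_sublist_mono {n : ℕ} (fdtc : BraidGroup n → ℝ)
    (hmono : ∀ (γ δ : BraidGroup n) (i : Fin (n - 1)),
      fdtc (γ * δ) ≤ fdtc (γ * braidGen i * δ))
    {u w : List (Fin (n - 1))} (h : u.Sublist w) :
    ∀ γ : BraidGroup n, fdtc (γ * (u.map braidGen).prod) ≤ fdtc (γ * (w.map braidGen).prod) := by
  induction h with
  | slnil => intro γ; exact le_refl _
  | cons a h ih =>
    intro γ
    rename_i l₁ l₂
    refine le_trans (ih γ) ?_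
    simpa [mul_assoc] using hmono γ ((l₂.map braidGen).prod) a
  | cons_cons a h ih =>
    intro γ
    have := ih (γ * braidGen a)
    simpa [mul_assoc] using this


/-- In `B_n` the fractional Dehn twist coefficient of `σ_1 σ_2 ⋯ σ_{n-1}`
equals `1/n`; consequently, if a positive braid `α` can be written as a positive word
containing all the generators `σ_1, …, σ_{n-1}`, then `c(α) ≥ 1/n > 0`. -/
theorem fdtc_of_braid_delta_root {n : ℕ} (fdtc : BraidGroup n → ℝ)
    (hfull : ∀ (N : ℤ) (γ : BraidGroup n), fdtc (fullTwist n ^ N * γ) = (N : ℝ) + fdtc γ)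
    (hconj : ∀ γ δ : BraidGroup n, fdtc (δ⁻¹ * γ * δ) = fdtc γ)
    (hpow : ∀ (γ : BraidGroup n) (k : ℤ), fdtc (γ ^ k) = (k : ℝ) * fdtc γ)
    (hmono : ∀ (γ δ : BraidGroup n) (i : Fin (n - 1)),
      fdtc (γ * δ) ≤ fdtc (γ * braidGen i * δ)) :
    fdtc ((List.ofFn fun i : Fin (n - 1) => braidGen i).prod) = 1 / (n : ℝ) ∧
    ∀ α : BraidGroup n,
      (∃ w : List (Fin (n - 1)), α = (w.map braidGen).prod ∧ ∀ i : Fin (n - 1), i ∈ w) →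
      1 / (n : ℝ) ≤ fdtc α ∧ 0 < fdtc α := by
  set δ : BraidGroup n := (List.ofFn fun i : Fin (n - 1) => braidGen i).prod with hδ
  have h1 : fdtc 1 = 0 := by
    have := hpow 1 0
    simpa using this
  rcases Nat.eq_zero_or_pos n with rfl | hn
  · exfalso
    have := hfull 1 1
    simp only [fullTwist, pow_zero, zpow_one, one_mul, Int.cast_one] at this
    rw [h1] at this
    linarith
  have hnR : (0 : ℝ) < (n : ℝ) := by exact_mod_cast hn
  have hdelta : fdtc δ = 1 / (n : ℝ) := by
    have h2 : fdtc (δ ^ (n : ℤ)) = (n : ℝ) * fdtc δ := by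
      have := hpow δ (n : ℤ)
      simpa using this
    have h3 : δ ^ (n : ℤ) = fullTwist n ^ (1 : ℤ) * 1 := by
      rw [zpow_one, mul_one, zpow_natCast]; rfl
    have h4 : fdtc (δ ^ (n : ℤ)) = 1 := by
      rw [h3, hfull 1 1, h1]; norm_num
    rw [h4] at h2
    field_simp at h2 ⊢
    linarith
  refine ⟨hdelta, ?_⟩
  rintro α ⟨w, rfl, hw⟩
  have hu : fdtc ((w.dedup.map braidGen).prod) = 1 / (n : ℝ) := by
    obtain ⟨v, hv⟩ := conj_delta (n - 1) le_rfl w.dedup w.nodup_dedup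
      (fun i => ⟨fun _ => i.isLt, fun _ => List.mem_dedup.mpr (hw i)⟩)
    rw [braidTail_last, mul_one] at hv
    rw [hv, ← hδ, hconj δ v, hdelta]
  have hle := fdtc_sublist_mono fdtc hmono (List.dedup_sublist w) 1
  simp only [one_mul] at hle
  rw [hu] at hle
  exact ⟨hle, lt_of_lt_of_le (by positivity) hle⟩
end
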